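/- For every natural number n and real x, the determinant of the (n+1)×(n+1) matrix with entries binom(x+i, j) for 0 ≤ i, j ≤ n equals 1. -/
import Mathlib


/-- The polynomial binomial coefficient `x(x-1)⋯(x-j+1)/j!`. -/
noncomputable def polyBinom (x : ℝ) (j : ℕ) : ℝ :=
  (∏ k ∈ Finset.range j, (x - (k : ℝ))) / Nat.factorial j

lemma polyBinom_zero (x : ℝ) : polyBinom x 0 = 1 := by simp [polyBinom]

lemma polyBinom_pascal (y : ℝ) (j : ℕ) :
    polyBinom (y + 1) (j + 1) = polyBinom y (j + 1) + polyBinom y j := by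
  have h1 : ∏ k ∈ Finset.range (j + 1), (y + 1 - (k : ℝ))
      = (∏ k ∈ Finset.range j, (y - (k : ℝ))) * (y + 1) := by
    rw [Finset.prod_range_succ']
    congr 1
    · apply Finset.prod_congr rfl
      intro k _
      push_cast
      ring
    · simp
  have h2 : ∏ k ∈ Finset.range (j + 1), (y - (k : ℝ))
      = (∏ k ∈ Finset.range j, (y - (k : ℝ))) * (y - j) := Finset.prod_range_succ _ _
  have hj : (Nat.factorial j : ℝ) ≠ 0 := by positivity
  have hj1 : ((j : ℝ) + 1) ≠ 0 := by positivity
  simp only [polyBinom, h1, h2, Nat.factorial_succ]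
  push_cast
  field_simp
  ring

lemma polyBinom_vandermonde (i : ℕ) (x : ℝ) (j : ℕ) :
    polyBinom (x + i) j
      = ∑ k ∈ Finset.range (j + 1), (Nat.choose i k : ℝ) * polyBinom x (j - k) := by
  induction i generalizing j with
  | zero =>
    rw [Finset.sum_eq_single 0]
    · simp
    · intro k _ hk
      cases k with
      | zero => simp at hk
      | succ m => simp [Nat.choose]
    · simp
  | succ i ih =>
    cases j with
    | zero => simp [polyBinom_zero]
    | succ j =>
      have hx : x + ((i : ℝ) + 1) = (x + i) + 1 := by ring
      push_cast
      rw [hx, polyBinom_pascal, ih (j + 1), ih j]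
      rw [Finset.sum_range_succ' (fun k => (Nat.choose i k : ℝ) * polyBinom x (j + 1 - k)),
          Finset.sum_range_succ' (fun k => (Nat.choose (i + 1) k : ℝ) * polyBinom x (j + 1 - k))]
      simp only [Nat.succ_sub_succ, Nat.sub_zero, Nat.choose_zero_right, Nat.cast_one,
        Nat.choose_succ_succ, Nat.cast_add]
      rw [add_right_comm]
      congr 1
      rw [← Finset.sum_add_distrib]
      apply Finset.sum_congr rfl
      intro k _
      ring

theorem det_shifted_binom (n : ℕ) (x : ℝ) :
    (Matrix.of fun i j : Fin (n + 1) => polyBinom (x + (i : ℕ)) (j : ℕ)).det = 1 := by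
  set A : Matrix (Fin (n + 1)) (Fin (n + 1)) ℝ :=
    Matrix.of fun i k : Fin (n + 1) => (Nat.choose (i : ℕ) (k : ℕ) : ℝ) with hA
  set B : Matrix (Fin (n + 1)) (Fin (n + 1)) ℝ :=
    Matrix.of fun k j : Fin (n + 1) =>
      if (k : ℕ) ≤ (j : ℕ) then polyBinom x ((j : ℕ) - (k : ℕ)) else 0 with hB
  have hM : (Matrix.of fun i j : Fin (n + 1) => polyBinom (x + (i : ℕ)) (j : ℕ)) = A * B := by
    ext i j
    simp only [Matrix.mul_apply, Matrix.of_apply, hA, hB]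
    rw [polyBinom_vandermonde]
    rw [Fin.sum_univ_eq_sum_range
      (fun k => (Nat.choose (i : ℕ) k : ℝ) * if k ≤ (j : ℕ) then polyBinom x ((j : ℕ) - k) else 0)]
    rw [← Finset.sum_subset (Finset.range_subset_range.2 (by omega : (j : ℕ) + 1 ≤ n + 1))]
    · apply Finset.sum_congr rfl
      intro k hk
      rw [Finset.mem_range] at hk
      rw [if_pos (by omega)]
    · intro k _ hk
      rw [Finset.mem_range] at hk
      rw [if_neg (by omega), mul_zero]
  rw [hM, Matrix.det_mul]
  have hdA : A.det = 1 := by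
    rw [Matrix.det_of_lowerTriangular A]
    · simp [hA]
    · intro i j hij
      simp only [hA, Matrix.of_apply]
      rw [Nat.choose_eq_zero_of_lt (by exact_mod_cast hij), Nat.cast_zero]
  have hdB : B.det = 1 := by
    have ht : B.BlockTriangular id := by
      intro i j hij
      simp only [hB, Matrix.of_apply]
      rw [if_neg (by exact_mod_cast Nat.not_le.2 hij)]
    rw [Matrix.det_of_upperTriangular ht]
    simp [hB, polyBinom_zero]
  rw [hdA, hdB, mul_one]
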